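/- Let f : ℝ₊ → ℝ₊ be continuous and positive with F(v) = ∫_{v₀}^{v} dt/f(t) satisfying F(v) → +∞ as v → +∞ and F(v) → −∞ as v → 0⁺. Let V : [t₀, t₁) → ℝ₊ be C¹ satisfying |V'(t)| ≤ C·f(V(t))·k(t), where C ≥ 0 is a constant and k : [t₀, t₁] → ℝ≥0 is integrable. Then V extends continuously to t₁ with a limit value ṽ ∈ (0, ∞). -/

import Mathlib

open Set Filter MeasureTheory intervalIntegral

theorem continuation_of_solution_to_boundary
    (f : ℝ → ℝ) (hfc : ContinuousOn f (Ioi 0)) (hfpos : ∀ v ∈ Ioi (0:ℝ), 0 < f v)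
    (v₀ : ℝ) (hv₀ : 0 < v₀)
    (F : ℝ → ℝ) (hF : ∀ v, F v = ∫ t in v₀..v, 1 / f t)
    (htop : Tendsto F atTop atTop)
    (hbot : Tendsto F (nhdsWithin 0 (Ioi 0)) atBot)
    (t₀ t₁ : ℝ) (ht : t₀ < t₁)
    (V : ℝ → ℝ) (hV : ContDiffOn ℝ 1 V (Ico t₀ t₁))
    (hVpos : ∀ t ∈ Ico t₀ t₁, 0 < V t)
    (C : ℝ) (hC : 0 ≤ C)
    (k : ℝ → ℝ) (hk : IntegrableOn k (Icc t₀ t₁))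
    (hknn : ∀ t ∈ Icc t₀ t₁, 0 ≤ k t)
    (hbound : ∀ t ∈ Ico t₀ t₁,
      |derivWithin V (Ico t₀ t₁) t| ≤ C * f (V t) * k t) :
    ∃ v' : ℝ, 0 < v' ∧ Tendsto V (nhdsWithin t₁ (Iio t₁)) (nhds v') := by
  set S : Set ℝ := Ico t₀ t₁ with hSdef
  -- continuity of 1/f on Ioi 0
  have hfinv : ContinuousOn (fun t => 1 / f t) (Ioi (0:ℝ)) :=
    continuousOn_const.div hfc (fun v hv => (hfpos v hv).ne')
  -- interval integrability of 1/f between positive points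
  have hint : ∀ a b : ℝ, 0 < a → 0 < b →
      IntervalIntegrable (fun t => 1 / f t) volume a b := by
    intro a b ha hb
    apply ContinuousOn.intervalIntegrable
    exact hfinv.mono (fun x hx => lt_of_lt_of_le (lt_min ha hb) hx.1)
  -- F has derivative 1/f on Ioi 0
  have hFderiv : ∀ v ∈ Ioi (0:ℝ), HasDerivAt F (1 / f v) v := by
    intro v hv
    have h1 : HasDerivAt (fun u => ∫ t in v₀..u, 1 / f t) (1 / f v) v := by
      refine integral_hasDerivAt_right (hint v₀ v hv₀ hv) ?_ ?_
      · exact ⟨Ioi 0, isOpen_Ioi.mem_nhds hv,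
          (hfinv.aestronglyMeasurable measurableSet_Ioi)⟩
      · exact hfinv.continuousAt (isOpen_Ioi.mem_nhds hv)
    have : F = fun u => ∫ t in v₀..u, 1 / f t := funext hF
    rw [this]; exact h1
  have hFcont : ContinuousOn F (Ioi (0:ℝ)) :=
    fun v hv => ((hFderiv v hv).continuousAt).continuousWithinAt
  -- F strictly monotone on Ioi 0
  have hFmono : StrictMonoOn F (Ioi (0:ℝ)) := by
    refine strictMonoOn_of_hasDerivWithinAt_pos (convex_Ioi 0) hFcont
      (fun v hv => ((hFderiv v (interior_subset hv)).hasDerivWithinAt)) ?_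
    intro v hv
    rw [interior_Ioi] at hv
    exact div_pos one_pos (hfpos v hv)
  -- V stuff
  have hSU : UniqueDiffOn ℝ S := uniqueDiffOn_Ico t₀ t₁
  have hVc : ContinuousOn V S := hV.continuousOn
  have hV' : ContinuousOn (derivWithin V S) S := hV.continuousOn_derivWithin hSU le_rfl
  have hVd : ∀ t ∈ S, HasDerivWithinAt V (derivWithin V S t) S t :=
    fun t htS => ((hV.differentiableOn one_ne_zero) t htS).hasDerivWithinAt
  -- G and its derivative
  set g : ℝ → ℝ := fun t => 1 / f (V t) * derivWithin V S t with hgdef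
  set G : ℝ → ℝ := fun t => F (V t) with hGdef
  have hG' : ∀ t ∈ S, HasDerivWithinAt G (g t) S t := fun t htS =>
    (hFderiv (V t) (hVpos t htS)).comp_hasDerivWithinAt t (hVd t htS)
  have hGcont : ContinuousOn G S :=
    hFcont.comp hVc (fun t htS => hVpos t htS)
  have hgcont : ContinuousOn g S := by
    refine ContinuousOn.mul (continuousOn_const.div (hfc.comp hVc (fun t htS => hVpos t htS))
      (fun t htS => (hfpos (V t) (hVpos t htS)).ne')) hV'
  have hgbound : ∀ t ∈ S, |g t| ≤ C * k t := by
    intro t htS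
    have hf1 : 0 < f (V t) := hfpos (V t) (hVpos t htS)
    have : |g t| = |derivWithin V S t| / f (V t) := by
      rw [hgdef]; rw [abs_mul, abs_of_pos (by positivity : (0:ℝ) < 1 / f (V t))]
      field_simp
    rw [this, div_le_iff₀ hf1]
    calc |derivWithin V S t| ≤ C * f (V t) * k t := hbound t htS
      _ = C * k t * f (V t) := by ring
  -- primitive of k
  set Kp : ℝ → ℝ := fun u => ∫ s in t₀..u, k s with hKpdef
  have hkint : ∀ a b : ℝ, a ∈ Icc t₀ t₁ → b ∈ Icc t₀ t₁ →
      IntervalIntegrable k volume a b := by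
    intro a b ha hb
    refine (hk.mono_set ?_).intervalIntegrable
    exact uIcc_subset_Icc ha hb
  have hKcont : ContinuousOn Kp (Icc t₀ t₁) := by
    have := continuousOn_primitive_interval (f := k) (μ := volume) (a := t₀) (b := t₁)
      (hk.mono_set (by rw [uIcc_of_le ht.le]))
    rwa [uIcc_of_le ht.le] at this
  have hKmono : MonotoneOn Kp (Icc t₀ t₁) := by
    intro a ha b hb hab
    have : Kp b - Kp a = ∫ s in a..b, k s := by
      rw [hKpdef]
      exact integral_interval_sub_left (hkint t₀ b (left_mem_Icc.2 ht.le) hb)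
        (hkint t₀ a (left_mem_Icc.2 ht.le) ha)
    have hpos : 0 ≤ ∫ s in a..b, k s := by
      apply intervalIntegral.integral_nonneg hab
      intro u hu
      exact hknn u ⟨ha.1.trans hu.1, hu.2.trans hb.2⟩
    linarith
  -- key estimate
  have key : ∀ a ∈ S, ∀ b ∈ S, a ≤ b → |G b - G a| ≤ C * (Kp b - Kp a) := by
    intro a haS b hbS hab
    have hIcc : Icc a b ⊆ S := fun x hx => ⟨haS.1.trans hx.1, lt_of_le_of_lt hx.2 hbS.2⟩
    have hIccT : Icc a b ⊆ Icc t₀ t₁ := fun x hx => ⟨haS.1.trans hx.1, (hx.2.trans hbS.2.le)⟩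
    have hgint : IntervalIntegrable g volume a b :=
      (hgcont.mono hIcc).intervalIntegrable_of_Icc hab
    have hku : IntegrableOn k (uIcc a b) := by
      rw [uIcc_of_le hab]; exact hk.mono_set hIccT
    have hckint : IntervalIntegrable (fun s => C * k s) volume a b :=
      hku.intervalIntegrable.const_mul C
    have heq : ∫ y in a..b, g y = G b - G a := by
      refine integral_eq_sub_of_hasDeriv_right_of_le hab (hGcont.mono hIcc) ?_ hgint
      intro x hx
      have hxS : x ∈ S := hIcc ⟨hx.1.le, hx.2.le⟩
      have hmem : S ∈ nhds x := by
        rw [hSdef]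
        exact Ico_mem_nhds (lt_of_le_of_lt haS.1 hx.1) hxS.2
      exact ((hG' x hxS).hasDerivAt hmem).hasDerivWithinAt
    have habs : |∫ y in a..b, g y| ≤ ∫ y in a..b, |g y| :=
      intervalIntegral.abs_integral_le_integral_abs hab
    have hmono : ∫ y in a..b, |g y| ≤ ∫ y in a..b, C * k y := by
      refine intervalIntegral.integral_mono_on hab hgint.abs hckint ?_
      intro u hu
      exact hgbound u (hIcc hu)
    have hval : ∫ y in a..b, C * k y = C * (Kp b - Kp a) := by
      rw [intervalIntegral.integral_const_mul]
      congr 1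
      rw [hKpdef]
      exact (integral_interval_sub_left (hkint t₀ b (left_mem_Icc.2 ht.le) (hIccT (right_mem_Icc.2 hab)))
        (hkint t₀ a (left_mem_Icc.2 ht.le) (hIccT (left_mem_Icc.2 hab)))).symm
    rw [← heq]
    calc |∫ y in a..b, g y| ≤ ∫ y in a..b, |g y| := habs
      _ ≤ ∫ y in a..b, C * k y := hmono
      _ = C * (Kp b - Kp a) := hval
  -- the auxiliary monotone function
  set H : ℝ → ℝ := fun t => G (max t t₀) + C * Kp (max t t₀) with hHdef
  have hmaxS : ∀ t ∈ Iio t₁, max t t₀ ∈ S := fun t htI => ⟨le_max_right _ _, max_lt htI ht⟩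
  have hHmono : MonotoneOn H (Iio t₁) := by
    intro a ha b hb hab
    have haS := hmaxS a ha
    have hbS := hmaxS b hb
    have hab' : max a t₀ ≤ max b t₀ := max_le_max hab le_rfl
    have := key _ haS _ hbS hab'
    simp only [hHdef]
    have h2 := neg_le_abs (G (max b t₀) - G (max a t₀))
    simp only [max_def] at this h2 ⊢
    linarith
  have hSsubIcc : S ⊆ Icc t₀ t₁ := Ico_subset_Icc_self
  have hHbdd : BddAbove (H '' Iio t₁) := by
    refine ⟨G t₀ + C * (Kp t₁ - Kp t₀) + C * Kp t₁, ?_⟩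
    rintro x ⟨a, ha, rfl⟩
    have haS := hmaxS a ha
    have h1 := key t₀ ⟨le_rfl, ht⟩ _ haS (le_max_right _ _)
    have h2 : G (max a t₀) - G t₀ ≤ C * (Kp (max a t₀) - Kp t₀) := le_trans (le_abs_self _) h1
    have h3 : Kp (max a t₀) ≤ Kp t₁ := hKmono (hSsubIcc haS) (right_mem_Icc.2 ht.le) haS.2.le
    simp only [hHdef]
    nlinarith
  set A : ℝ := sSup (H '' Iio t₁) with hAdef
  have hHtend : Tendsto H (nhdsWithin t₁ (Iio t₁)) (nhds A) :=
    hHmono.tendsto_nhdsLT hHbdd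
  -- Kp tends to Kp t₁
  have hKtend : Tendsto Kp (nhdsWithin t₁ (Iio t₁)) (nhds (Kp t₁)) := by
    have h1 : ContinuousWithinAt Kp (Icc t₀ t₁) t₁ := hKcont t₁ (right_mem_Icc.2 ht.le)
    have h2 : nhdsWithin t₁ (Iio t₁) = nhdsWithin t₁ (Ico t₀ t₁) :=
      (nhdsWithin_Ico_eq_nhdsLT ht).symm
    rw [h2]
    exact h1.tendsto.mono_left (nhdsWithin_mono _ hSsubIcc)
  -- G tends to L
  set L : ℝ := A - C * Kp t₁ with hLdef
  have hGtend : Tendsto G (nhdsWithin t₁ (Iio t₁)) (nhds L) := by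
    have h1 : Tendsto (fun t => H t - C * Kp t) (nhdsWithin t₁ (Iio t₁)) (nhds L) :=
      hHtend.sub (hKtend.const_mul C)
    refine h1.congr' ?_
    filter_upwards [Ioo_mem_nhdsLT_of_mem (show t₁ ∈ Ioc t₀ t₁ from ⟨ht, le_rfl⟩)] with t htI
    simp only [hHdef]
    rw [max_eq_left htI.1.le]
    ring
  -- find v' with F v' = L
  obtain ⟨b₀, hb₀⟩ : ∃ b₀ : ℝ, v₀ ≤ b₀ ∧ L < F b₀ := by
    have h1 : ∀ᶠ v in atTop, L < F v := htop.eventually_gt_atTop L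
    have h2 : ∀ᶠ v in atTop, v₀ ≤ v := eventually_ge_atTop v₀
    exact (h2.and h1).exists
  obtain ⟨a₀, ha₀⟩ : ∃ a₀ : ℝ, a₀ ∈ Ioi (0:ℝ) ∧ F a₀ < L := by
    have h1 : ∀ᶠ v in nhdsWithin 0 (Ioi 0), F v < L := hbot.eventually_lt_atBot L
    exact ((h1.and self_mem_nhdsWithin)).exists.imp (fun x hx => ⟨hx.2, hx.1⟩)
  have ha₀pos : 0 < a₀ := ha₀.1
  have hb₀pos : 0 < b₀ := lt_of_lt_of_le hv₀ hb₀.1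
  have hab₀ : a₀ < b₀ := by
    by_contra hcon
    push_neg at hcon
    rcases eq_or_lt_of_le hcon with h | h
    · rw [h] at hb₀; linarith [ha₀.2, hb₀.2]
    · have := hFmono hb₀pos ha₀pos h
      linarith [ha₀.2, hb₀.2]
  have hIcc₀ : Icc a₀ b₀ ⊆ Ioi (0:ℝ) := fun x hx => lt_of_lt_of_le ha₀pos hx.1
  obtain ⟨v', hv'mem, hv'eq⟩ : ∃ v' ∈ Icc a₀ b₀, F v' = L := by
    have := intermediate_value_Icc hab₀.le (hFcont.mono hIcc₀)
    exact this ⟨ha₀.2.le, hb₀.2.le⟩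
  have hv'pos : 0 < v' := lt_of_lt_of_le ha₀pos hv'mem.1
  refine ⟨v', hv'pos, ?_⟩
  -- convergence of V
  have hevS : ∀ᶠ t in nhdsWithin t₁ (Iio t₁), t ∈ S := by
    filter_upwards [Ioo_mem_nhdsLT_of_mem (show t₁ ∈ Ioc t₀ t₁ from ⟨ht, le_rfl⟩)] with t htI
    exact ⟨htI.1.le, htI.2⟩
  rw [tendsto_order]
  constructor
  · intro c hc
    rcases le_or_gt c 0 with hc0 | hc0
    · filter_upwards [hevS] with t htS
      exact lt_of_le_of_lt hc0 (hVpos t htS)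
    · have hFc : F c < L := by
        rw [← hv'eq]; exact hFmono hc0 hv'pos hc
      filter_upwards [hevS, hGtend.eventually (eventually_gt_nhds hFc)] with t htS hGt
      by_contra hcon
      push_neg at hcon
      have : F (V t) ≤ F c := by
        rcases eq_or_lt_of_le hcon with h | h
        · rw [h]
        · exact (hFmono (hVpos t htS) hc0 h).le
      exact absurd hGt (by simp only [hGdef] at this ⊢; linarith)
  · intro c hc
    have hcpos : 0 < c := hv'pos.trans hc
    have hFc : L < F c := by
      rw [← hv'eq]; exact hFmono hv'pos hcpos hc
    filter_upwards [hevS, hGtend.eventually (eventually_lt_nhds hFc)] with t htS hGt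
    by_contra hcon
    push_neg at hcon
    have : F c ≤ F (V t) := by
      rcases eq_or_lt_of_le hcon with h | h
      · rw [h]
      · exact (hFmono hcpos (hVpos t htS) h).le
    exact absurd hGt (by simp only [hGdef] at this ⊢; linarith)
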